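/- Let ḡ be as above (with ḡ⁻¹(2t) ≤ 2^{1/(p−1)} ḡ⁻¹(t) for all t ≥ 0, p > 1), and let β > 1. Then there is a constant C = C(p, q, β) > 0 such that for any summable sequence of nonnegative reals (a_i)_{i≥1}: g⁻¹(Σᵢ aᵢ) ≤ C · Σᵢ βⁱ · g⁻¹(aᵢ). -/

import Mathlib

/-- Let `g⁻¹` be the inverse of `g`, `ḡ⁻¹` that of `ḡ(t) = G(t)/t`, with
`p^{1/(q−1)} g⁻¹(t) ≤ ḡ⁻¹(t) ≤ q^{1/(p−1)} g⁻¹(t)` and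
`ḡ⁻¹(λt) ≤ λ^{1/(p−1)} ḡ⁻¹(t)` for `λ ≥ 1`.  For every `β > 1` there is
`C = C(p,q,β) > 0` such that for any summable nonnegative sequence `(aᵢ)_{i≥1}`,
`g⁻¹(Σᵢ aᵢ) ≤ C Σᵢ βⁱ g⁻¹(aᵢ)` (the right-hand side taken in `[0,∞]`). -/
theorem stmt_8 (p q : ℝ) (hp : 1 < p) (hpq : p ≤ q)
    (ginv gbarInv : ℝ → ℝ)
    (hginv_nonneg : ∀ x, 0 ≤ x → 0 ≤ ginv x)
    (hmono : ∀ x y, 0 ≤ x → x ≤ y → gbarInv x ≤ gbarInv y)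
    (hcomp : ∀ t : ℝ, 0 ≤ t →
      p ^ (1 / (q - 1)) * ginv t ≤ gbarInv t ∧
      gbarInv t ≤ q ^ (1 / (p - 1)) * ginv t)
    (hscale : ∀ l t : ℝ, 1 ≤ l → 0 ≤ t →
      gbarInv (l * t) ≤ l ^ (1 / (p - 1)) * gbarInv t)
    (β : ℝ) (hβ : 1 < β) :
    ∃ C : ℝ, 0 < C ∧ ∀ a : ℕ → ℝ, (∀ i, 0 ≤ a i) → Summable a →
      ENNReal.ofReal (ginv (∑' i, a i)) ≤
        ENNReal.ofReal C * ∑' i : ℕ, ENNReal.ofReal (β ^ (i + 1) * ginv (a i)) := by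
  have hq : 1 < q := lt_of_lt_of_le hp hpq
  have hβ0 : (0:ℝ) < β := by linarith
  set e := 1 / (p - 1) with he
  have hep : 0 < e := by rw [he]; apply div_pos one_pos; linarith
  have hpne : p - 1 ≠ 0 := by linarith
  set r := β ^ (p - 1) with hrdef
  have hr : 1 < r := Real.one_lt_rpow_iff_of_pos hβ0 |>.mpr (Or.inl ⟨hβ, by linarith⟩)
  have hr0 : 0 < r := by linarith
  set P := p ^ (1 / (q - 1)) with hPdef
  have hP : 0 < P := Real.rpow_pos_of_pos (by linarith) _
  set M := max (r - 1)⁻¹ 1 with hMdef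
  have hM1 : (1:ℝ) ≤ M := le_max_right _ _
  have hM : (0:ℝ) < M := lt_of_lt_of_le one_pos hM1
  have hqe : (0:ℝ) ≤ q ^ e := (Real.rpow_pos_of_pos (by linarith) _).le
  have hMe : (0:ℝ) ≤ M ^ e := (Real.rpow_pos_of_pos hM _).le
  refine ⟨P⁻¹ * q ^ e * M ^ e, by positivity, ?_⟩
  intro a ha hsum
  set S := ∑' i, a i with hSdef
  have hS0 : 0 ≤ S := tsum_nonneg ha
  -- geometric series facts
  have hx : r⁻¹ < 1 := inv_lt_one_of_one_lt₀ hr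
  have hx0 : (0:ℝ) ≤ r⁻¹ := by positivity
  have hgsum : Summable (fun i : ℕ => (r - 1) * (r⁻¹) ^ (i + 1) * S) := by
    apply Summable.mul_right
    apply Summable.mul_left
    exact (summable_geometric_of_lt_one hx0 hx).comp_injective (add_left_injective 1)
  have hgeo : ∑' i : ℕ, (r - 1) * (r⁻¹) ^ (i + 1) * S = S := by
    have h1 : ∑' i : ℕ, (r - 1) * (r⁻¹) ^ (i + 1) * S
        = ((r - 1) * r⁻¹ * S) * ∑' i : ℕ, (r⁻¹) ^ i := by
      rw [← tsum_mul_left]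
      congr 1; funext i; rw [pow_succ]; ring
    rw [h1, tsum_geometric_of_lt_one hx0 hx]
    have hne : r - 1 ≠ 0 := by linarith
    have hrne : r ≠ 0 := by linarith
    field_simp
  have key : ∃ i : ℕ, (r - 1) * (r⁻¹) ^ (i + 1) * S ≤ a i := by
    by_contra hcon
    push_neg at hcon
    have hlt : S < S := by
      calc S = ∑' i, a i := rfl
        _ < ∑' i : ℕ, (r - 1) * (r⁻¹) ^ (i + 1) * S :=
            Summable.tsum_lt_tsum (fun i => (hcon i).le) (hcon 0) hsum hgsum
        _ = S := hgeo
    exact lt_irrefl _ hlt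
  obtain ⟨i, hi⟩ := key
  set l := max (r ^ (i + 1) * (r - 1)⁻¹) 1 with hldef
  have hl1 : (1:ℝ) ≤ l := le_max_right _ _
  have hrp : (0:ℝ) < r ^ (i + 1) := pow_pos hr0 _
  have hrp1 : (1:ℝ) ≤ r ^ (i + 1) := one_le_pow₀ hr.le
  have hSl : S ≤ l * a i := by
    have hpos : (0:ℝ) < r ^ (i + 1) * (r - 1)⁻¹ := by
      apply mul_pos hrp; rw [inv_pos]; linarith
    have h2 := mul_le_mul_of_nonneg_left hi hpos.le
    have h3 : (r ^ (i + 1) * (r - 1)⁻¹) * ((r - 1) * (r⁻¹) ^ (i + 1) * S) = S := by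
      have hne : r - 1 ≠ 0 := by linarith
      have hrne : r ≠ 0 := by linarith
      field_simp
      rw [← mul_pow, mul_one_div_cancel hrne, one_pow, one_mul]
    have h4 : S ≤ (r ^ (i + 1) * (r - 1)⁻¹) * a i := by rw [← h3]; exact h2
    exact le_trans h4 (mul_le_mul_of_nonneg_right (le_max_left _ _) (ha i))
  have hstep1 : gbarInv S ≤ l ^ e * gbarInv (a i) :=
    le_trans (hmono S (l * a i) hS0 hSl) (hscale l (a i) hl1 (ha i))
  have hle0 : (0:ℝ) ≤ l ^ e := (Real.rpow_pos_of_pos (by linarith) _).le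
  have hlM : l ≤ M * r ^ (i + 1) := by
    apply max_le
    · calc r ^ (i + 1) * (r - 1)⁻¹ ≤ r ^ (i + 1) * M :=
          mul_le_mul_of_nonneg_left (le_max_left _ _) hrp.le
        _ = M * r ^ (i + 1) := mul_comm _ _
    · calc (1:ℝ) ≤ r ^ (i + 1) := hrp1
        _ = 1 * r ^ (i + 1) := (one_mul _).symm
        _ ≤ M * r ^ (i + 1) := mul_le_mul_of_nonneg_right hM1 hrp.le
  have hre : (r ^ (i + 1) : ℝ) ^ e = β ^ (i + 1) := by
    rw [hrdef, ← Real.rpow_natCast (β ^ (p - 1)) (i + 1), ← Real.rpow_mul hβ0.le,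
      ← Real.rpow_mul hβ0.le]
    have : (p - 1) * (↑(i + 1) : ℝ) * e = (↑(i + 1) : ℝ) := by
      rw [he]; field_simp
    rw [this, Real.rpow_natCast]
  have hle2 : l ^ e ≤ M ^ e * β ^ (i + 1) := by
    calc l ^ e ≤ (M * r ^ (i + 1)) ^ e :=
        Real.rpow_le_rpow (by linarith) hlM hep.le
      _ = M ^ e * (r ^ (i + 1)) ^ e := Real.mul_rpow hM.le hrp.le
      _ = M ^ e * β ^ (i + 1) := by rw [hre]
  have hG : 0 ≤ ginv (a i) := hginv_nonneg _ (ha i)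
  have hfinal : ginv S ≤ (P⁻¹ * q ^ e * M ^ e) * (β ^ (i + 1) * ginv (a i)) := by
    have h1 : P * ginv S ≤ gbarInv S := (hcomp S hS0).1
    have h2 : gbarInv (a i) ≤ q ^ e * ginv (a i) := (hcomp (a i) (ha i)).2
    have h3 : gbarInv S ≤ l ^ e * (q ^ e * ginv (a i)) :=
      le_trans hstep1 (mul_le_mul_of_nonneg_left h2 hle0)
    have h4 : gbarInv S ≤ (M ^ e * β ^ (i + 1)) * (q ^ e * ginv (a i)) :=
      le_trans h3 (mul_le_mul_of_nonneg_right hle2 (by positivity))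
    have h5 : ginv S ≤ P⁻¹ * gbarInv S := (le_inv_mul_iff₀ hP).mpr h1
    calc ginv S ≤ P⁻¹ * gbarInv S := h5
      _ ≤ P⁻¹ * ((M ^ e * β ^ (i + 1)) * (q ^ e * ginv (a i))) :=
        mul_le_mul_of_nonneg_left h4 (by positivity)
      _ = (P⁻¹ * q ^ e * M ^ e) * (β ^ (i + 1) * ginv (a i)) := by ring
  calc ENNReal.ofReal (ginv S)
      ≤ ENNReal.ofReal ((P⁻¹ * q ^ e * M ^ e) * (β ^ (i + 1) * ginv (a i))) :=
        ENNReal.ofReal_le_ofReal hfinal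
    _ = ENNReal.ofReal (P⁻¹ * q ^ e * M ^ e) * ENNReal.ofReal (β ^ (i + 1) * ginv (a i)) :=
        ENNReal.ofReal_mul (by positivity)
    _ ≤ ENNReal.ofReal (P⁻¹ * q ^ e * M ^ e) *
        ∑' j : ℕ, ENNReal.ofReal (β ^ (j + 1) * ginv (a j)) :=
        mul_le_mul_right (ENNReal.le_tsum i) _
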